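/- arXiv:2505.19491 — 3 statements merged into one kernel-verified Lean document; each statement's English description precedes it below -/
import Mathlib

section
/- Let λ ∈ (0,1) and run OGD with an arbitrary step size η > 0. Then for every w ∈ W, the λ-discounted regret satisfies ∑_{t=1}^T λ^{T−t}·f_t(w_t) − ∑_{t=1}^T λ^{T−t}·f_t(w) ≤ D²/η + η·G²/(2(1−λ)). -/
open Finset

-- gradient inequality for convex differentiable functions
lemma grad_ineq {E : Type*} [NormedAddCommGroup E] [InnerProductSpace ℝ E] [CompleteSpace E]
    (f : E → ℝ) (hconv : ConvexOn ℝ Set.univ f) (hdiff : Differentiable ℝ f) (x y : E) :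
    f x + inner ℝ (gradient f x) (y - x) ≤ f y := by
  set g : ℝ → ℝ := fun s => f (x + s • (y - x)) with hg
  have hgc : ConvexOn ℝ Set.univ g := by
    have := hconv.comp_affineMap (AffineMap.lineMap x y : ℝ →ᵃ[ℝ] E)
    have heq : (f ∘ (AffineMap.lineMap x y : ℝ →ᵃ[ℝ] E)) = g := by
      ext s
      simp only [hg, Function.comp_apply, AffineMap.lineMap_apply, vsub_eq_sub, vadd_eq_add]
      rw [add_comm]
    simpa [heq] using this
  have hcurve : HasDerivAt (fun s : ℝ => x + s • (y - x)) (y - x) (0 : ℝ) := by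
    simpa using ((hasDerivAt_id (0:ℝ)).smul_const (y - x)).const_add x
  have hfd : HasFDerivAt f ((InnerProductSpace.toDual ℝ E) (gradient f x)) x :=
    (hasGradientAt_iff_hasFDerivAt.mp (hdiff x).hasGradientAt)
  have hgd : HasDerivAt g (inner ℝ (gradient f x) (y - x)) 0 := by
    have hx0 : x + (0:ℝ) • (y - x) = x := by simp
    have hfd' : HasFDerivAt f ((InnerProductSpace.toDual ℝ E) (gradient f x))
        (x + (0:ℝ) • (y - x)) := by rw [hx0]; exact hfd
    have := hfd'.comp_hasDerivAt 0 hcurve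
    rw [InnerProductSpace.toDual_apply_apply] at this; exact this
  have hslope := hgc.le_slope_of_hasDerivAt (Set.mem_univ (0:ℝ)) (Set.mem_univ (1:ℝ))
    (by norm_num) hgd
  have : inner ℝ (gradient f x) (y - x) ≤ g 1 - g 0 := by
    simpa [slope_def_field] using hslope
  have hg0 : g 0 = f x := by simp [hg]
  have hg1 : g 1 = f y := by simp [hg]
  linarith [this, hg0.le]

lemma proj_contract {E : Type*} [NormedAddCommGroup E] [InnerProductSpace ℝ E]
    (K : Set E) (hK : Convex ℝ K) (y p : E) (hp : p ∈ K)
    (hmin : ∀ u ∈ K, ‖p - y‖ ≤ ‖u - y‖) (z : E) (hz : z ∈ K) :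
    ‖p - z‖ ≤ ‖y - z‖ := by
  have hinf : ‖y - p‖ = ⨅ w : K, ‖y - w‖ := by
    haveI : Nonempty K := ⟨⟨p, hp⟩⟩
    apply le_antisymm
    · apply le_ciInf
      intro ⟨u, hu⟩
      calc ‖y - p‖ = ‖p - y‖ := norm_sub_rev _ _
        _ ≤ ‖u - y‖ := hmin u hu
        _ = ‖y - u‖ := norm_sub_rev _ _
    · have hbdd : BddBelow (Set.range fun w : K => ‖y - (w : E)‖) := by
        refine ⟨0, ?_⟩
        rintro x ⟨i, rfl⟩
        exact norm_nonneg _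
      exact ciInf_le hbdd ⟨p, hp⟩
  have hvar := (norm_eq_iInf_iff_real_inner_le_zero hK hp).mp hinf z hz
  -- ⟪y - p, z - p⟫ ≤ 0
  have key : ‖y - z‖ ^ 2 = ‖y - p‖ ^ 2 - 2 * inner ℝ (y - p) (z - p) + ‖p - z‖ ^ 2 := by
    have h1 : y - z = (y - p) - (z - p) := by abel
    rw [h1, @norm_sub_sq_real]
    have : ‖z - p‖ = ‖p - z‖ := norm_sub_rev _ _
    rw [this]
  nlinarith [norm_nonneg (y - z), norm_nonneg (p - z), norm_nonneg (y - p), sq_nonneg (‖y-p‖)]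

lemma telescope_bound (a : ℕ → ℝ) (D2 : ℝ) (lam : ℝ) (h0 : 0 ≤ lam) (h1 : lam ≤ 1)
    (ha : ∀ t, 1 ≤ t → 0 ≤ a t ∧ a t ≤ D2) (T : ℕ) :
    ∑ t ∈ Finset.Icc 1 T, lam ^ (T - t) * (a t - a (t + 1)) ≤ D2 - a (T + 1) := by
  induction T with
  | zero => simpa using (ha 1 le_rfl).2
  | succ T ih =>
    rw [Finset.sum_Icc_succ_top (by omega : 1 ≤ T + 1)]
    have hre : ∑ t ∈ Finset.Icc 1 T, lam ^ (T + 1 - t) * (a t - a (t + 1))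
        = lam * ∑ t ∈ Finset.Icc 1 T, lam ^ (T - t) * (a t - a (t + 1)) := by
      rw [Finset.mul_sum]
      apply Finset.sum_congr rfl
      intro t ht
      have : T + 1 - t = (T - t) + 1 := by
        have := (Finset.mem_Icc.mp ht).2; omega
      rw [this, pow_succ]; ring
    rw [hre]
    simp only [Nat.sub_self, pow_zero, one_mul]
    have h2 := (ha (T + 1) (by omega)).1
    have h3 := (ha (T + 1) (by omega)).2
    nlinarith [mul_le_mul_of_nonneg_left ih h0]

/-- OGD with arbitrary step size η > 0 achieves λ-discounted regret
at most D²/η + η·G²/(2(1−λ)). -/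
theorem ogd_discounted_regret_general
    {d : ℕ} (W : Set (EuclideanSpace ℝ (Fin d)))
    (hWne : W.Nonempty) (hWclosed : IsClosed W) (hWconv : Convex ℝ W)
    (D G : ℝ) (hD : 0 < D) (hG : 0 < G)
    (hdiam : ∀ u ∈ W, ∀ v ∈ W, ‖u - v‖ ≤ D)
    (T : ℕ) (f : ℕ → EuclideanSpace ℝ (Fin d) → ℝ)
    (hconv : ∀ t ∈ Finset.Icc 1 T, ConvexOn ℝ Set.univ (f t))
    (hdiff : ∀ t ∈ Finset.Icc 1 T, Differentiable ℝ (f t))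
    (hgrad : ∀ t ∈ Finset.Icc 1 T, ∀ u ∈ W, ‖gradient (f t) u‖ ≤ G)
    (lam : ℝ) (hlam : lam ∈ Set.Ioo (0 : ℝ) 1)
    (η : ℝ) (hη : 0 < η)
    (w : ℕ → EuclideanSpace ℝ (Fin d))
    (hw1 : w 1 ∈ W) (hwmem : ∀ t, w (t + 1) ∈ W)
    (hproj : ∀ t, 1 ≤ t → t ≤ T → ∀ u ∈ W,
      ‖w (t + 1) - (w t - η • gradient (f t) (w t))‖ ≤
        ‖u - (w t - η • gradient (f t) (w t))‖)
    (wstar : EuclideanSpace ℝ (Fin d)) (hwstar : wstar ∈ W) :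
    ∑ t ∈ Finset.Icc 1 T, lam ^ (T - t) * f t (w t)
      - ∑ t ∈ Finset.Icc 1 T, lam ^ (T - t) * f t wstar
      ≤ D ^ 2 / η + η * G ^ 2 / (2 * (1 - lam)) := by
  obtain ⟨hlam0, hlam1⟩ := hlam
  have h1lam : 0 < 1 - lam := by linarith
  set a : ℕ → ℝ := fun t => ‖w t - wstar‖ ^ 2 with ha_def
  have hmemW : ∀ t, 1 ≤ t → w t ∈ W := by
    intro t ht
    obtain ⟨n, rfl⟩ : ∃ n, t = n + 1 := ⟨t - 1, by omega⟩
    exact hwmem n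
  have ha : ∀ t, 1 ≤ t → 0 ≤ a t ∧ a t ≤ D ^ 2 := by
    intro t ht
    constructor
    · positivity
    · exact pow_le_pow_left₀ (norm_nonneg _) (hdiam _ (hmemW t ht) _ hwstar) 2
  -- per-step key inequality
  have key : ∀ t ∈ Finset.Icc 1 T,
      f t (w t) - f t wstar ≤ (a t - a (t + 1)) / (2 * η) + η * G ^ 2 / 2 := by
    intro t ht
    obtain ⟨ht1, htT⟩ := Finset.mem_Icc.mp ht
    set g : EuclideanSpace ℝ (Fin d) := gradient (f t) (w t) with hgdef
    set y : EuclideanSpace ℝ (Fin d) := w t - η • g with hydef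
    have hG1 : ‖g‖ ≤ G := hgrad t ht (w t) (hmemW t ht1)
    have hgi := grad_ineq (f t) (hconv t ht) (hdiff t ht) (w t) wstar
    have hgi' : f t (w t) - f t wstar ≤ inner ℝ g (w t - wstar) := by
      have hflip : (inner ℝ g (wstar - w t) : ℝ) = - inner ℝ g (w t - wstar) := by
        rw [← inner_neg_right]; congr 1; abel
      rw [hflip] at hgi; linarith
    have hcontr : ‖w (t + 1) - wstar‖ ≤ ‖y - wstar‖ :=
      proj_contract W hWconv y (w (t + 1)) (hwmem t)
        (fun u hu => hproj t ht1 htT u hu) wstar hwstar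
    have hexp : ‖y - wstar‖ ^ 2
        = a t - 2 * η * inner ℝ g (w t - wstar) + η ^ 2 * ‖g‖ ^ 2 := by
      have h1 : y - wstar = (w t - wstar) - η • g := by rw [hydef]; abel
      rw [h1, @norm_sub_sq_real]
      rw [real_inner_smul_right, norm_smul, Real.norm_eq_abs, abs_of_pos hη,
        real_inner_comm]
      simp only [ha_def]
      ring
    have hsq : a (t + 1) ≤ ‖y - wstar‖ ^ 2 :=
      pow_le_pow_left₀ (norm_nonneg _) hcontr 2
    have hgsq : ‖g‖ ^ 2 ≤ G ^ 2 := pow_le_pow_left₀ (norm_nonneg _) hG1 2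
    rw [hexp] at hsq
    have h2η : (0:ℝ) < 2 * η := by positivity
    have key2 : inner ℝ g (w t - wstar) ≤ ((a t - a (t + 1)) + η ^ 2 * G ^ 2) / (2 * η) := by
      rw [le_div_iff₀ h2η]
      nlinarith [hsq, hgsq, sq_nonneg η]
    have heq2 : ((a t - a (t + 1)) + η ^ 2 * G ^ 2) / (2 * η)
        = (a t - a (t + 1)) / (2 * η) + η * G ^ 2 / 2 := by
      field_simp
    rw [heq2] at key2
    linarith [hgi', key2]
  -- sum manipulation
  have hw0 : ∀ t ∈ Finset.Icc 1 T, (0:ℝ) ≤ lam ^ (T - t) := fun t _ => by positivity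
  have step1 : ∑ t ∈ Finset.Icc 1 T, lam ^ (T - t) * f t (w t)
      - ∑ t ∈ Finset.Icc 1 T, lam ^ (T - t) * f t wstar
      = ∑ t ∈ Finset.Icc 1 T, lam ^ (T - t) * (f t (w t) - f t wstar) := by
    rw [← Finset.sum_sub_distrib]
    exact Finset.sum_congr rfl fun t _ => by ring
  have step2 : ∑ t ∈ Finset.Icc 1 T, lam ^ (T - t) * (f t (w t) - f t wstar)
      ≤ ∑ t ∈ Finset.Icc 1 T,
          lam ^ (T - t) * ((a t - a (t + 1)) / (2 * η) + η * G ^ 2 / 2) :=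
    Finset.sum_le_sum fun t ht =>
      mul_le_mul_of_nonneg_left (key t ht) (hw0 t ht)
  have step3 : ∑ t ∈ Finset.Icc 1 T,
        lam ^ (T - t) * ((a t - a (t + 1)) / (2 * η) + η * G ^ 2 / 2)
      = (∑ t ∈ Finset.Icc 1 T, lam ^ (T - t) * (a t - a (t + 1))) / (2 * η)
        + (η * G ^ 2 / 2) * ∑ t ∈ Finset.Icc 1 T, lam ^ (T - t) := by
    rw [Finset.sum_div, Finset.mul_sum, ← Finset.sum_add_distrib]
    exact Finset.sum_congr rfl fun t _ => by ring
  have htel := telescope_bound a (D ^ 2) lam hlam0.le hlam1.le ha T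
  have haT1 : 0 ≤ a (T + 1) := (ha (T + 1) (by omega)).1
  have hgeo : ∑ t ∈ Finset.Icc 1 T, lam ^ (T - t) ≤ 1 / (1 - lam) := by
    have hre : ∑ t ∈ Finset.Icc 1 T, lam ^ (T - t)
        = ∑ k ∈ Finset.range T, lam ^ k := by
      apply Finset.sum_nbij' (fun t => T - t) (fun k => T - k)
      · intro t ht
        have := Finset.mem_Icc.mp ht
        exact Finset.mem_range.mpr (by omega)
      · intro k hk
        have := Finset.mem_range.mp hk
        exact Finset.mem_Icc.mpr (by omega)
      · intro t ht; have := Finset.mem_Icc.mp ht; omega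
      · intro k hk; have := Finset.mem_range.mp hk; omega
      · intro t ht; rfl
    rw [hre]
    have hmul := geom_sum_mul lam T
    rw [le_div_iff₀ h1lam]
    nlinarith [pow_nonneg hlam0.le T, hmul]
  -- combine
  rw [step1]
  have hS1 : (∑ t ∈ Finset.Icc 1 T, lam ^ (T - t) * (a t - a (t + 1))) / (2 * η)
      ≤ D ^ 2 / η := by
    rw [div_le_div_iff₀ (by positivity) hη]
    nlinarith [htel, haT1, sq_nonneg D]
  have hS2 : (η * G ^ 2 / 2) * ∑ t ∈ Finset.Icc 1 T, lam ^ (T - t)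
      ≤ η * G ^ 2 / (2 * (1 - lam)) := by
    have h' : (η * G ^ 2 / 2) * (1 / (1 - lam)) = η * G ^ 2 / (2 * (1 - lam)) := by
      field_simp
    rw [← h']
    exact mul_le_mul_of_nonneg_left hgeo (by positivity)
  calc ∑ t ∈ Finset.Icc 1 T, lam ^ (T - t) * (f t (w t) - f t wstar)
      ≤ ∑ t ∈ Finset.Icc 1 T,
          lam ^ (T - t) * ((a t - a (t + 1)) / (2 * η) + η * G ^ 2 / 2) := step2
    _ = (∑ t ∈ Finset.Icc 1 T, lam ^ (T - t) * (a t - a (t + 1))) / (2 * η)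
        + (η * G ^ 2 / 2) * ∑ t ∈ Finset.Icc 1 T, lam ^ (T - t) := step3
    _ ≤ D ^ 2 / η + η * G ^ 2 / (2 * (1 - lam)) := add_le_add hS1 hS2
end

section
/- Suppose Z ≤ 1/e and n ≥ max{8e, 16·ln(1/Z)}. Then U(n) = g̃^{−1}(1) satisfies U(n) ≤ √(16·n·ln(1/Z)). -/
noncomputable def erf (x : ℝ) : ℝ := ∫ s in (0:ℝ)..x, Real.exp (-(s ^ 2) / 2)

noncomputable def gtilde (n Z x : ℝ) : ℝ :=
  Real.sqrt (n / 8) * Z * erf (x / Real.sqrt (8 * n)) * Real.exp (x ^ 2 / (16 * n))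

lemma erf_intble (a b : ℝ) :
    IntervalIntegrable (fun s => Real.exp (-(s ^ 2) / 2)) MeasureTheory.volume a b :=
  (Real.continuous_exp.comp (by continuity)).intervalIntegrable a b

lemma erf_strict_mono {a b : ℝ} (h : a < b) : erf a < erf b := by
  have key : erf a + ∫ s in a..b, Real.exp (-(s ^ 2) / 2) = erf b :=
    intervalIntegral.integral_add_adjacent_intervals (erf_intble 0 a) (erf_intble a b)
  have hpos : 0 < ∫ s in a..b, Real.exp (-(s ^ 2) / 2) :=
    intervalIntegral.intervalIntegral_pos_of_pos (erf_intble a b)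
      (fun x => Real.exp_pos _) h
  linarith

lemma erf_mono {a b : ℝ} (h : a ≤ b) : erf a ≤ erf b := by
  rcases h.eq_or_lt with rfl | h
  · exact le_rfl
  · exact (erf_strict_mono h).le

lemma erf_one_ge : Real.exp (-(1:ℝ)/2) ≤ erf 1 := by
  have : (∫ s in (0:ℝ)..1, Real.exp (-(1:ℝ) / 2)) ≤ ∫ s in (0:ℝ)..1, Real.exp (-(s ^ 2) / 2) := by
    apply intervalIntegral.integral_mono_on zero_le_one
      (intervalIntegrable_const) (erf_intble 0 1)
    intro x hx
    apply Real.exp_le_exp.mpr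
    have h1 : x ^ 2 ≤ 1 := by nlinarith [hx.1, hx.2]
    linarith
  simpa [erf] using this

/-- the threshold `U(n) = g̃⁻¹(1)` satisfies `U(n) ≤ √(16·n·ln(1/Z))`. -/
theorem U_upper_bound
    (n Z : ℝ) (hn1 : 1 ≤ n) (hZpos : 0 < Z) (hZ : Z ≤ 1 / Real.exp 1)
    (hn : n ≥ max (8 * Real.exp 1) (16 * Real.log (1 / Z)))
    (U : ℝ) (hU0 : 0 ≤ U) (hU1 : gtilde n Z U = 1) :
    U ≤ Real.sqrt (16 * n * Real.log (1 / Z)) := by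
  set L := Real.log (1 / Z) with hL
  have hnpos : (0:ℝ) < n := lt_of_lt_of_le one_pos hn1
  have hL1 : 1 ≤ L := by
    have : Real.exp 1 ≤ 1 / Z := by
      rw [le_div_iff₀ hZpos]
      calc Real.exp 1 * Z ≤ Real.exp 1 * (1 / Real.exp 1) := by
            exact mul_le_mul_of_nonneg_left hZ (Real.exp_pos 1).le
        _ = 1 := by field_simp
    calc (1:ℝ) = Real.log (Real.exp 1) := (Real.log_exp 1).symm
      _ ≤ L := Real.log_le_log (Real.exp_pos 1) this
  have hLpos : 0 < L := lt_of_lt_of_le one_pos hL1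
  set x₀ := Real.sqrt (16 * n * L) with hx₀
  by_contra hcon
  push_neg at hcon
  have hx₀0 : 0 ≤ x₀ := Real.sqrt_nonneg _
  -- gtilde at x₀ ≥ 1
  have hsq : x₀ ^ 2 = 16 * n * L := Real.sq_sqrt (by positivity)
  have hexp : Real.exp (x₀ ^ 2 / (16 * n)) = 1 / Z := by
    rw [hsq]
    have : 16 * n * L / (16 * n) = L := by field_simp
    rw [this, hL, Real.exp_log (by positivity)]
  have ht1 : (1:ℝ) ≤ x₀ / Real.sqrt (8 * n) := by
    rw [le_div_iff₀ (Real.sqrt_pos.mpr (by positivity))]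
    rw [one_mul, hx₀]
    apply Real.sqrt_le_sqrt
    nlinarith
  have herf : Real.exp (-(1:ℝ)/2) ≤ erf (x₀ / Real.sqrt (8 * n)) :=
    le_trans erf_one_ge (erf_mono ht1)
  have hsqrt : Real.exp ((1:ℝ)/2) ≤ Real.sqrt (n / 8) := by
    rw [Real.exp_half]
    apply Real.sqrt_le_sqrt
    have := le_trans (le_max_left _ _) hn
    linarith
  have hg0 : 1 ≤ gtilde n Z x₀ := by
    unfold gtilde
    rw [hexp]
    have key : Real.exp (1/2) * Real.exp (-(1:ℝ)/2) ≤
        Real.sqrt (n / 8) * erf (x₀ / Real.sqrt (8 * n)) := by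
      apply mul_le_mul hsqrt herf (Real.exp_pos _).le (Real.sqrt_nonneg _)
    have h1 : Real.exp (1/2) * Real.exp (-(1:ℝ)/2) = 1 := by
      rw [← Real.exp_add]; norm_num
    rw [h1] at key
    calc (1:ℝ) ≤ Real.sqrt (n / 8) * erf (x₀ / Real.sqrt (8 * n)) := key
      _ = Real.sqrt (n / 8) * Z * erf (x₀ / Real.sqrt (8 * n)) * (1 / Z) := by
          field_simp
  -- strict monotonicity: gtilde x₀ < gtilde U
  have herf_lt : erf (x₀ / Real.sqrt (8 * n)) < erf (U / Real.sqrt (8 * n)) := by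
    apply erf_strict_mono
    exact div_lt_div_of_pos_right hcon (Real.sqrt_pos.mpr (by positivity))
  have hexp_le : Real.exp (x₀ ^ 2 / (16 * n)) ≤ Real.exp (U ^ 2 / (16 * n)) := by
    apply Real.exp_le_exp.mpr
    apply div_le_div_of_nonneg_right _ (by positivity)
    nlinarith
  have herf0 : 0 < erf (x₀ / Real.sqrt (8 * n)) := lt_of_lt_of_le (Real.exp_pos _) herf
  have hCpos : 0 < Real.sqrt (n / 8) * Z := by positivity
  have hlt : gtilde n Z x₀ < gtilde n Z U := by
    unfold gtilde
    calc Real.sqrt (n / 8) * Z * erf (x₀ / Real.sqrt (8 * n)) * Real.exp (x₀ ^ 2 / (16 * n))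
        ≤ Real.sqrt (n / 8) * Z * erf (x₀ / Real.sqrt (8 * n)) * Real.exp (U ^ 2 / (16 * n)) := by
          apply mul_le_mul_of_nonneg_left hexp_le (by positivity)
      _ < Real.sqrt (n / 8) * Z * erf (U / Real.sqrt (8 * n)) * Real.exp (U ^ 2 / (16 * n)) := by
          apply mul_lt_mul_of_pos_right _ (Real.exp_pos _)
          exact mul_lt_mul_of_pos_left herf_lt hCpos
  rw [hU1] at hlt
  linarith
end

section
/- Suppose Z ≤ 1/e and n ≥ max{8e, 16·ln(1/Z)}. For any real bit sequence b_1,…,b_T with |b_t| ≤ 1, ρ = 1 − 1/n, and the DNP deviation sequence x_t with potential Φ_t, the discounted payoff satisfies ∑_{t=1}^T ρ^{T−t}·g(x_t)·b_t ≥ ∑_{t=1}^T ρ^{T−t}·b_t + ∑_{t=1}^T (ρ^{T−t}/n)·(x_t·g(x_t)/2 − Φ_t) − Z/(2(1−ρ)) − x_{T+1}. -/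
/-- `g` is the projection of `g̃` onto `[0,1]`. -/
noncomputable def gfun (n Z x : ℝ) : ℝ := min (max (gtilde n Z x) 0) 1

/-- The potential `Φ(x) = ∫_0^x g(s) ds`. -/
noncomputable def Phi (n Z x : ℝ) : ℝ := ∫ s in (0:ℝ)..x, gfun n Z s


lemma erf_cont_integrand : Continuous fun s : ℝ => Real.exp (-(s ^ 2) / 2) := by
  continuity

lemma erf_integrable (a b : ℝ) :
    IntervalIntegrable (fun s : ℝ => Real.exp (-(s ^ 2) / 2)) MeasureTheory.volume a b :=
  erf_cont_integrand.intervalIntegrable a b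

lemma erf_zero : erf 0 = 0 := by simp [erf]

lemma erf_continuous : Continuous erf :=
  intervalIntegral.continuous_primitive (fun a b => erf_integrable a b) 0

lemma erf_sub (a b : ℝ) : erf b - erf a = ∫ s in a..b, Real.exp (-(s ^ 2) / 2) := by
  have h := intervalIntegral.integral_add_adjacent_intervals (erf_integrable 0 a) (erf_integrable a b)
  simp only [erf]
  linarith [h]

lemma erf_mono_s6 : Monotone erf := by
  intro a b hab
  have h : 0 ≤ erf b - erf a := by
    rw [erf_sub]
    apply intervalIntegral.integral_nonneg hab
    intro s _
    positivity
  linarith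

lemma erf_diff_le (a b : ℝ) (ha : 0 ≤ a) (hab : a ≤ b) :
    erf b - erf a ≤ (b - a) * Real.exp (-(a ^ 2) / 2) := by
  rw [erf_sub]
  have h := intervalIntegral.integral_mono_on (μ := MeasureTheory.volume)
    (g := fun _ : ℝ => Real.exp (-(a ^ 2) / 2)) hab
    (erf_integrable a b) ((continuous_const).intervalIntegrable a b)
    (fun s hs => by
      have h1 : a ≤ s := hs.1
      have : -(s ^ 2) / 2 ≤ -(a ^ 2) / 2 := by nlinarith
      exact Real.exp_le_exp.2 this)
  simpa using h

lemma erf_nonneg {x : ℝ} (hx : 0 ≤ x) : 0 ≤ erf x := by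
  have := erf_mono_s6 hx
  rwa [erf_zero] at this

lemma erf_nonpos {x : ℝ} (hx : x ≤ 0) : erf x ≤ 0 := by
  have := erf_mono_s6 hx
  rwa [erf_zero] at this

lemma erf_le_self {x : ℝ} (hx : 0 ≤ x) : erf x ≤ x := by
  have h := erf_diff_le 0 x le_rfl hx
  simpa [erf_zero] using h

section GT
variable {n Z : ℝ}

lemma K_pos (hn0 : 0 < n) : 0 < Real.sqrt (8 * n) := Real.sqrt_pos.2 (by positivity)

lemma Ksq (hn0 : 0 < n) : Real.sqrt (8 * n) ^ 2 = 8 * n := Real.sq_sqrt (by positivity)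

lemma sqrt_n8 (hn0 : 0 < n) : Real.sqrt (n / 8) = Real.sqrt (8 * n) / 8 := by
  have h2 := K_pos hn0
  apply mul_right_cancel₀ (ne_of_gt h2)
  have h1 : Real.sqrt (n / 8) * Real.sqrt (8 * n) = n := by
    rw [← Real.sqrt_mul (by positivity)]
    have : n / 8 * (8 * n) = n ^ 2 := by ring
    rw [this, Real.sqrt_sq hn0.le]
  have h3 := Ksq hn0
  rw [h1, div_mul_eq_mul_div, ← sq, h3]
  ring

lemma sq_div_K (hn0 : 0 < n) (y : ℝ) :
    -((y / Real.sqrt (8 * n)) ^ 2) / 2 = -(y ^ 2) / (16 * n) := by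
  have h3 := Ksq hn0
  have hne : (8 : ℝ) * n ≠ 0 := by positivity
  rw [div_pow, h3]
  field_simp
  ring

lemma div_le_div_K (hn0 : 0 < n) {a b : ℝ} (hab : a ≤ b) :
    a / Real.sqrt (8 * n) ≤ b / Real.sqrt (8 * n) :=
  div_le_div_of_nonneg_right hab (K_pos hn0).le

lemma gtilde_nonneg (hZpos : 0 < Z) {x : ℝ} (hx : 0 ≤ x) : 0 ≤ gtilde n Z x := by
  unfold gtilde
  have h1 : 0 ≤ erf (x / Real.sqrt (8 * n)) :=
    erf_nonneg (div_nonneg hx (Real.sqrt_nonneg _))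
  positivity

lemma gtilde_nonpos (hZpos : 0 < Z) {x : ℝ} (hx : x ≤ 0) : gtilde n Z x ≤ 0 := by
  unfold gtilde
  have h1 : erf (x / Real.sqrt (8 * n)) ≤ 0 :=
    erf_nonpos (div_nonpos_of_nonpos_of_nonneg hx (Real.sqrt_nonneg _))
  have h2 : (0:ℝ) ≤ Real.sqrt (n / 8) * Z := by positivity
  have h4 : Real.sqrt (n / 8) * Z * erf (x / Real.sqrt (8 * n)) ≤ 0 :=
    mul_nonpos_of_nonneg_of_nonpos h2 h1
  exact mul_nonpos_of_nonpos_of_nonneg h4 (Real.exp_pos _).le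

lemma gtilde_mono (hn0 : 0 < n) (hZpos : 0 < Z) : Monotone (gtilde n Z) := by
  intro a b hab
  have herf : erf (a / Real.sqrt (8 * n)) ≤ erf (b / Real.sqrt (8 * n)) :=
    erf_mono_s6 (div_le_div_K hn0 hab)
  have hc : 0 ≤ Real.sqrt (n / 8) * Z := by positivity
  rcases le_or_gt 0 a with ha | ha
  · unfold gtilde
    have h1 : 0 ≤ erf (a / Real.sqrt (8 * n)) :=
      erf_nonneg (div_nonneg ha (Real.sqrt_nonneg _))
    have h2 : Real.exp (a ^ 2 / (16 * n)) ≤ Real.exp (b ^ 2 / (16 * n)) := by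
      apply Real.exp_le_exp.2
      apply div_le_div_of_nonneg_right _ (by positivity)
      nlinarith
    have he : 0 < Real.exp (a ^ 2 / (16 * n)) := Real.exp_pos _
    calc Real.sqrt (n / 8) * Z * erf (a / Real.sqrt (8 * n)) * Real.exp (a ^ 2 / (16 * n))
        ≤ Real.sqrt (n / 8) * Z * erf (b / Real.sqrt (8 * n)) * Real.exp (a ^ 2 / (16 * n)) := by
          apply mul_le_mul_of_nonneg_right _ he.le
          exact mul_le_mul_of_nonneg_left herf hc
      _ ≤ Real.sqrt (n / 8) * Z * erf (b / Real.sqrt (8 * n)) * Real.exp (b ^ 2 / (16 * n)) := by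
          apply mul_le_mul_of_nonneg_left h2
          exact mul_nonneg hc (h1.trans herf)
  · rcases le_or_gt 0 b with hb | hb
    · exact le_trans (gtilde_nonpos hZpos ha.le) (gtilde_nonneg hZpos hb)
    · unfold gtilde
      have h1 : erf (b / Real.sqrt (8 * n)) ≤ 0 :=
        erf_nonpos (div_nonpos_of_nonpos_of_nonneg hb.le (Real.sqrt_nonneg _))
      have h2 : Real.exp (b ^ 2 / (16 * n)) ≤ Real.exp (a ^ 2 / (16 * n)) := by
        apply Real.exp_le_exp.2
        apply div_le_div_of_nonneg_right _ (by positivity)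
        nlinarith
      have he : 0 < Real.exp (b ^ 2 / (16 * n)) := Real.exp_pos _
      calc Real.sqrt (n / 8) * Z * erf (a / Real.sqrt (8 * n)) * Real.exp (a ^ 2 / (16 * n))
          ≤ Real.sqrt (n / 8) * Z * erf (a / Real.sqrt (8 * n)) * Real.exp (b ^ 2 / (16 * n)) := by
            rcases eq_or_lt_of_le (mul_nonpos_of_nonneg_of_nonpos hc (herf.trans h1)) with heq | hlt
            · nlinarith [Real.exp_pos (a ^ 2 / (16 * n))]
            · nlinarith [Real.exp_pos (a ^ 2 / (16 * n))]
        _ ≤ Real.sqrt (n / 8) * Z * erf (b / Real.sqrt (8 * n)) * Real.exp (b ^ 2 / (16 * n)) := by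
            exact mul_le_mul_of_nonneg_right (mul_le_mul_of_nonneg_left herf hc) he.le

lemma gtilde_continuous (hn0 : 0 < n) : Continuous (gtilde n Z) := by
  unfold gtilde
  have : Continuous fun x : ℝ => erf (x / Real.sqrt (8 * n)) :=
    erf_continuous.comp (by continuity)
  continuity

lemma gtilde_zero : gtilde n Z 0 = 0 := by simp [gtilde, erf_zero]

/-- downward difference bound -/
lemma gtilde_down (hn0 : 0 < n) (hZpos : 0 < Z) {y x : ℝ} (hy : 0 ≤ y) (hyx : y ≤ x) :
    gtilde n Z x - gtilde n Z y ≤ (x - y) * (Z / 8 + x * gtilde n Z x / (8 * n)) := by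
  have hKpos := K_pos hn0
  set K := Real.sqrt (8 * n) with hK
  set c := Real.sqrt (n / 8) * Z with hc
  have hcpos : 0 < c := by rw [hc]; positivity
  set A := erf (x / K) with hA
  set B := erf (y / K) with hB
  set E := Real.exp (x ^ 2 / (16 * n)) with hE
  set e2 := Real.exp (y ^ 2 / (16 * n)) with he2
  have hgx : gtilde n Z x = c * A * E := rfl
  have hgy : gtilde n Z y = c * B * e2 := rfl
  have hApos : 0 ≤ A := erf_nonneg (div_nonneg (hy.trans hyx) hKpos.le)
  have hcK : c / K = Z / 8 := by
    rw [hc, hK, sqrt_n8 hn0]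
    field_simp
  have hAB : A - B ≤ (x - y) / K * Real.exp (-(y ^ 2) / (16 * n)) := by
    have h := erf_diff_le (y / K) (x / K) (div_nonneg hy hKpos.le) (div_le_div_K hn0 hyx)
    rw [sq_div_K hn0 y] at h
    calc A - B ≤ (x / K - y / K) * Real.exp (-(y ^ 2) / (16 * n)) := h
      _ = (x - y) / K * Real.exp (-(y ^ 2) / (16 * n)) := by ring
  have hexp : Real.exp (-(y ^ 2) / (16 * n)) * e2 = 1 := by
    rw [he2, ← Real.exp_add]
    rw [show -(y ^ 2) / (16 * n) + y ^ 2 / (16 * n) = 0 by ring, Real.exp_zero]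
  have he2pos : 0 < e2 := Real.exp_pos _
  have hterm2 : c * (A - B) * e2 ≤ (x - y) * Z / 8 := by
    have h1 : c * (A - B) * e2 ≤ c * ((x - y) / K * Real.exp (-(y ^ 2) / (16 * n))) * e2 := by
      have := mul_le_mul_of_nonneg_left hAB hcpos.le
      exact mul_le_mul_of_nonneg_right this he2pos.le
    have h2 : c * ((x - y) / K * Real.exp (-(y ^ 2) / (16 * n))) * e2
        = (x - y) * (c / K) * (Real.exp (-(y ^ 2) / (16 * n)) * e2) := by ring
    rw [h2, hexp, mul_one, hcK] at h1
    linarith [h1]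
  have hEpos : 0 < E := Real.exp_pos _
  have hterm1 : c * A * (E - e2) ≤ gtilde n Z x * ((x - y) * (2 * x) / (16 * n)) := by
    have hEe : E - e2 ≤ E * ((x ^ 2 - y ^ 2) / (16 * n)) := by
      have h1 : 1 - (x ^ 2 - y ^ 2) / (16 * n) ≤ Real.exp (-((x ^ 2 - y ^ 2) / (16 * n))) := by
        linarith [Real.add_one_le_exp (-((x ^ 2 - y ^ 2) / (16 * n)))]
      have h2 : e2 = E * Real.exp (-((x ^ 2 - y ^ 2) / (16 * n))) := by
        rw [he2, hE, ← Real.exp_add]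
        congr 1
        field_simp
        ring
      rw [h2]; nlinarith
    have hsq : (x ^ 2 - y ^ 2) / (16 * n) ≤ (x - y) * (2 * x) / (16 * n) := by
      apply div_le_div_of_nonneg_right _ (by positivity)
      nlinarith
    have hcA : 0 ≤ c * A := mul_nonneg hcpos.le hApos
    rw [hgx]
    calc c * A * (E - e2) ≤ c * A * (E * ((x ^ 2 - y ^ 2) / (16 * n))) :=
          mul_le_mul_of_nonneg_left hEe hcA
      _ = c * A * E * ((x ^ 2 - y ^ 2) / (16 * n)) := by ring
      _ ≤ c * A * E * ((x - y) * (2 * x) / (16 * n)) :=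
          mul_le_mul_of_nonneg_left hsq (by positivity)
  have expand : gtilde n Z x - gtilde n Z y = c * A * (E - e2) + c * (A - B) * e2 := by
    rw [hgx, hgy]; ring
  rw [expand]
  have hfin : gtilde n Z x * ((x - y) * (2 * x) / (16 * n)) + (x - y) * Z / 8
      = (x - y) * (Z / 8 + x * gtilde n Z x / (8 * n)) := by
    field_simp
    ring
  linarith [hterm1, hterm2]

/-- upward difference bound -/
lemma gtilde_up (hn0 : 0 < n) (hZpos : 0 < Z) {x : ℝ} (hx : 0 ≤ x) :
    gtilde n Z (x + 1) - gtilde n Z x ≤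
      gtilde n Z x * (Real.exp ((2 * x + 1) / (16 * n)) - 1)
        + Z / 8 * Real.exp ((2 * x + 1) / (16 * n)) := by
  have hKpos := K_pos hn0
  set K := Real.sqrt (8 * n) with hK
  set c := Real.sqrt (n / 8) * Z with hc
  have hcpos : 0 < c := by rw [hc]; positivity
  set θ := (2 * x + 1) / (16 * n) with hθ
  set A := erf (x / K) with hA
  set A' := erf ((x + 1) / K) with hA'
  set E := Real.exp (x ^ 2 / (16 * n)) with hE
  have hE' : Real.exp ((x + 1) ^ 2 / (16 * n)) = E * Real.exp θ := by
    rw [hE, hθ, ← Real.exp_add]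
    congr 1
    field_simp
    ring
  have hgx : gtilde n Z x = c * A * E := rfl
  have hgx1 : gtilde n Z (x + 1) = c * A' * (E * Real.exp θ) := by
    show c * A' * Real.exp ((x + 1) ^ 2 / (16 * n)) = _
    rw [hE']
  have hcK : c / K = Z / 8 := by
    rw [hc, hK, sqrt_n8 hn0]
    field_simp
  have hAA : A' - A ≤ 1 / K * Real.exp (-(x ^ 2) / (16 * n)) := by
    have h := erf_diff_le (x / K) ((x + 1) / K) (div_nonneg hx hKpos.le)
      (div_le_div_K hn0 (by linarith))
    rw [sq_div_K hn0 x] at h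
    calc A' - A ≤ ((x + 1) / K - x / K) * Real.exp (-(x ^ 2) / (16 * n)) := h
      _ = 1 / K * Real.exp (-(x ^ 2) / (16 * n)) := by ring
  have hexp : Real.exp (-(x ^ 2) / (16 * n)) * E = 1 := by
    rw [hE, ← Real.exp_add]
    rw [show -(x ^ 2) / (16 * n) + x ^ 2 / (16 * n) = 0 by ring, Real.exp_zero]
  have hEpos : 0 < E := Real.exp_pos _
  have hθpos : 0 < Real.exp θ := Real.exp_pos _
  have hterm2 : c * (A' - A) * (E * Real.exp θ) ≤ Z / 8 * Real.exp θ := by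
    have h1 : c * (A' - A) * E ≤ c / K := by
      have h0 : c * (A' - A) * E ≤ c * (1 / K * Real.exp (-(x ^ 2) / (16 * n))) * E := by
        have := mul_le_mul_of_nonneg_left hAA hcpos.le
        exact mul_le_mul_of_nonneg_right this hEpos.le
      have h2 : c * (1 / K * Real.exp (-(x ^ 2) / (16 * n))) * E
          = c / K * (Real.exp (-(x ^ 2) / (16 * n)) * E) := by ring
      rw [h2, hexp, mul_one] at h0
      exact h0
    calc c * (A' - A) * (E * Real.exp θ) = (c * (A' - A) * E) * Real.exp θ := by ring
      _ ≤ c / K * Real.exp θ := mul_le_mul_of_nonneg_right h1 hθpos.le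
      _ = Z / 8 * Real.exp θ := by rw [hcK]
  have expand : gtilde n Z (x + 1) - gtilde n Z x
      = c * A * E * (Real.exp θ - 1) + c * (A' - A) * (E * Real.exp θ) := by
    rw [hgx1, hgx]; ring
  rw [expand, hgx]
  linarith [hterm2]

/-- linear bound -/
lemma gtilde_le_lin (hn0 : 0 < n) (hZpos : 0 < Z) {x : ℝ} (hx : 0 ≤ x) :
    gtilde n Z x ≤ Z * x / 8 * Real.exp (x ^ 2 / (16 * n)) := by
  unfold gtilde
  have hKpos := K_pos hn0
  have h1 : erf (x / Real.sqrt (8 * n)) ≤ x / Real.sqrt (8 * n) :=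
    erf_le_self (div_nonneg hx hKpos.le)
  have h2 : Real.sqrt (n / 8) * Z * (x / Real.sqrt (8 * n)) = Z * x / 8 := by
    rw [sqrt_n8 hn0]
    field_simp
  have hEpos : 0 < Real.exp (x ^ 2 / (16 * n)) := Real.exp_pos _
  have hc : 0 ≤ Real.sqrt (n / 8) * Z := by positivity
  calc Real.sqrt (n / 8) * Z * erf (x / Real.sqrt (8 * n)) * Real.exp (x ^ 2 / (16 * n))
      ≤ Real.sqrt (n / 8) * Z * (x / Real.sqrt (8 * n)) * Real.exp (x ^ 2 / (16 * n)) :=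
        mul_le_mul_of_nonneg_right (mul_le_mul_of_nonneg_left h1 hc) hEpos.le
    _ = Z * x / 8 * Real.exp (x ^ 2 / (16 * n)) := by rw [h2]

end GT

section G
variable {n Z : ℝ}

lemma exp_le_inv {x : ℝ} (h0 : 0 ≤ x) (h1 : x < 1) : Real.exp x ≤ 1 / (1 - x) := by
  have h := Real.add_one_le_exp (-x)
  rw [Real.exp_neg] at h
  have hp := Real.exp_pos x
  rw [le_div_iff₀ (by linarith)]
  have h2 : (1 - x) * Real.exp x ≤ (Real.exp x)⁻¹ * Real.exp x :=
    mul_le_mul_of_nonneg_right (by linarith) hp.le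
  rw [inv_mul_cancel₀ (ne_of_gt hp)] at h2
  linarith

lemma gfun_nonneg : 0 ≤ gfun n Z x := le_min (le_max_right _ _) zero_le_one

lemma gfun_le_one : gfun n Z x ≤ 1 := min_le_right _ _

lemma gfun_mono (hn0 : 0 < n) (hZpos : 0 < Z) : Monotone (gfun n Z) := by
  intro a b hab
  unfold gfun
  have := gtilde_mono hn0 hZpos hab
  exact min_le_min (max_le_max this le_rfl) le_rfl

lemma gfun_of_nonpos (hZpos : 0 < Z) {x : ℝ} (hx : x ≤ 0) : gfun n Z x = 0 := by
  unfold gfun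
  rw [max_eq_right (gtilde_nonpos hZpos hx), min_eq_left zero_le_one]

lemma gfun_eq_of_le_one (hZpos : 0 < Z) {x : ℝ} (hx : 0 ≤ x) (h1 : gtilde n Z x ≤ 1) :
    gfun n Z x = gtilde n Z x := by
  unfold gfun
  rw [max_eq_left (gtilde_nonneg hZpos hx), min_eq_left h1]

lemma gfun_eq_one (h1 : 1 ≤ gtilde n Z x) : gfun n Z x = 1 := by
  unfold gfun
  rw [max_eq_left (le_trans zero_le_one h1), min_eq_right h1]

lemma gfun_le_gtilde (hZpos : 0 < Z) {x : ℝ} (hx : 0 ≤ x) : gfun n Z x ≤ gtilde n Z x := by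
  unfold gfun
  rw [max_eq_left (gtilde_nonneg hZpos hx)]
  exact min_le_left _ _

lemma gfun_continuous (hn0 : 0 < n) : Continuous (gfun n Z) := by
  unfold gfun
  exact ((gtilde_continuous hn0).max continuous_const).min continuous_const

lemma mul_gfun_nonneg (hZpos : 0 < Z) (x : ℝ) : 0 ≤ x * gfun n Z x := by
  rcases le_or_gt 0 x with hx | hx
  · exact mul_nonneg hx gfun_nonneg
  · rw [gfun_of_nonpos hZpos hx.le, mul_zero]

/-- key downward Lipschitz-type bound -/
lemma gdown (hn0 : 0 < n) (hZpos : 0 < Z) {x w : ℝ} (hx : 0 ≤ x) (hw : 0 ≤ w) :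
    gfun n Z x - gfun n Z (x - w) ≤ w * (Z / 8 + x * gfun n Z x / (8 * n)) := by
  set y := max (x - w) 0 with hy
  have hy0 : 0 ≤ y := le_max_right _ _
  have hyx : y ≤ x := max_le (by linarith) hx
  have hxy : x - y ≤ w := by
    have : x - w ≤ y := le_max_left _ _
    linarith
  have hgy_eq : gfun n Z (x - w) = gfun n Z y := by
    rcases le_or_gt 0 (x - w) with h | h
    · rw [hy, max_eq_left h]
    · rw [gfun_of_nonpos hZpos h.le, hy, max_eq_right h.le,
        gfun_of_nonpos hZpos le_rfl]
  have hRHSfac : 0 ≤ Z / 8 + x * gfun n Z x / (8 * n) := by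
    have := mul_gfun_nonneg (n := n) hZpos x
    positivity
  rcases le_or_gt (gtilde n Z x) 1 with hle | hgt
  · -- unclamped case
    have hgx : gfun n Z x = gtilde n Z x := gfun_eq_of_le_one hZpos hx hle
    have hgyv : gfun n Z y = gtilde n Z y :=
      gfun_eq_of_le_one hZpos hy0 (le_trans (gtilde_mono hn0 hZpos hyx) hle)
    rw [hgy_eq, hgx, hgyv]
    calc gtilde n Z x - gtilde n Z y ≤ (x - y) * (Z / 8 + x * gtilde n Z x / (8 * n)) :=
          gtilde_down hn0 hZpos hy0 hyx
      _ ≤ w * (Z / 8 + x * gtilde n Z x / (8 * n)) := by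
          apply mul_le_mul_of_nonneg_right hxy
          rw [← hgx]
          exact hRHSfac
  · -- clamped case : gfun x = 1
    have hgx : gfun n Z x = 1 := gfun_eq_one hgt.le
    rcases le_or_gt 1 (gtilde n Z y) with hy1 | hy1
    · have h1 : gfun n Z y = 1 := gfun_eq_one hy1
      rw [hgy_eq, hgx, h1]
      simp only [sub_self]
      positivity
    · -- IVT
      have hcont : ContinuousOn (gtilde n Z) (Set.Icc y x) :=
        (gtilde_continuous hn0).continuousOn
      have hmem : (1:ℝ) ∈ Set.Icc (gtilde n Z y) (gtilde n Z x) := ⟨hy1.le, hgt.le⟩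
      obtain ⟨U, hU, hUval⟩ := intermediate_value_Icc hyx hcont hmem
      have hgyv : gfun n Z y = gtilde n Z y := gfun_eq_of_le_one hZpos hy0 hy1.le
      rw [hgy_eq, hgx, hgyv]
      have step : 1 - gtilde n Z y ≤ (U - y) * (Z / 8 + U * gtilde n Z U / (8 * n)) := by
        rw [← hUval]
        exact gtilde_down hn0 hZpos hy0 hU.1
      rw [hUval] at step
      have hUx : U ≤ x := hU.2
      have hUy : U - y ≤ w := by linarith
      have hfac : Z / 8 + U * 1 / (8 * n) ≤ Z / 8 + x * 1 / (8 * n) := by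
        have : U * 1 ≤ x * 1 := by linarith
        have h8n : (0:ℝ) < 8 * n := by positivity
        have := div_le_div_of_nonneg_right this h8n.le
        linarith [this]
      have hUy0 : 0 ≤ U - y := by linarith [hU.1]
      have hfac0 : 0 ≤ Z / 8 + U * 1 / (8 * n) := by
        have hU0 : 0 ≤ U := le_trans hy0 hU.1
        positivity
      calc 1 - gtilde n Z y ≤ (U - y) * (Z / 8 + U * 1 / (8 * n)) := step
        _ ≤ w * (Z / 8 + x * 1 / (8 * n)) :=
            mul_le_mul hUy hfac hfac0 hw
/-- key upward bound -/
lemma gup (hn1 : 1 ≤ n) (hZpos : 0 < Z) {x : ℝ} (hx : 0 ≤ x) (hxn : x ≤ n) :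
    gfun n Z (x + 1) - gfun n Z x ≤ Z / 2 + x * gfun n Z x / (2 * n) := by
  have hn0 : (0:ℝ) < n := by linarith
  have hRHS0 : 0 ≤ Z / 2 + x * gfun n Z x / (2 * n) := by
    have := mul_gfun_nonneg (n := n) hZpos x
    positivity
  rcases lt_or_ge 1 (gtilde n Z x) with hgt | hle
  · have hgx : gfun n Z x = 1 := gfun_eq_one hgt.le
    have : gfun n Z (x + 1) ≤ 1 := gfun_le_one
    rw [hgx]
    have hxx : 0 ≤ x * 1 / (2 * n) := by positivity
    linarith
  · have hgx : gfun n Z x = gtilde n Z x := gfun_eq_of_le_one hZpos hx hle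
    have hstep : gfun n Z (x + 1) - gfun n Z x ≤ gtilde n Z (x + 1) - gtilde n Z x := by
      have h1 : gfun n Z (x + 1) ≤ gtilde n Z (x + 1) :=
        gfun_le_gtilde hZpos (by linarith)
      rw [hgx]
      linarith
    set θ := (2 * x + 1) / (16 * n) with hθ
    have hθ0 : 0 ≤ θ := by positivity
    have hθ316 : θ ≤ 3 / 16 := by
      rw [hθ, div_le_iff₀ (by positivity)]
      nlinarith
    have hexpθ : Real.exp θ ≤ 16 / 13 := by
      calc Real.exp θ ≤ Real.exp (3 / 16) := Real.exp_le_exp.2 hθ316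
        _ ≤ 1 / (1 - 3 / 16) := exp_le_inv (by norm_num) (by norm_num)
        _ = 16 / 13 := by norm_num
    have hexpθ1 : Real.exp θ - 1 ≤ θ * Real.exp θ := by
      have h := Real.add_one_le_exp (-θ)
      rw [Real.exp_neg] at h
      have hp := Real.exp_pos θ
      have h2 : (-θ + 1) * Real.exp θ ≤ (Real.exp θ)⁻¹ * Real.exp θ :=
        mul_le_mul_of_nonneg_right h hp.le
      rw [inv_mul_cancel₀ (ne_of_gt hp)] at h2
      nlinarith
    have hup := gtilde_up hn0 hZpos hx
    rw [← hθ] at hup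
    have hg0 : 0 ≤ gtilde n Z x := gtilde_nonneg hZpos hx
    -- combine
    have hmain : gtilde n Z (x + 1) - gtilde n Z x ≤
        gtilde n Z x * (2 * x + 1) / (13 * n) + 2 * Z / 13 := by
      have h1 : gtilde n Z x * (Real.exp θ - 1) ≤ gtilde n Z x * (θ * (16 / 13)) := by
        apply mul_le_mul_of_nonneg_left _ hg0
        calc Real.exp θ - 1 ≤ θ * Real.exp θ := hexpθ1
          _ ≤ θ * (16 / 13) := mul_le_mul_of_nonneg_left hexpθ hθ0
      have h2 : Z / 8 * Real.exp θ ≤ 2 * Z / 13 := by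
        have := mul_le_mul_of_nonneg_left hexpθ (by positivity : (0:ℝ) ≤ Z / 8)
        linarith
      have h3 : gtilde n Z x * (θ * (16 / 13)) = gtilde n Z x * (2 * x + 1) / (13 * n) := by
        rw [hθ]; field_simp
      linarith [hup, h1, h2]
    rcases le_or_gt (2/9 : ℝ) x with hx29 | hx29
    · -- large x : absorb into slack
      have h4 : gtilde n Z x * (2 * x + 1) / (13 * n) ≤ x * gtilde n Z x / (2 * n) := by
        rw [div_le_div_iff₀ (by positivity) (by positivity)]
        have key : 2 * (2 * x + 1) ≤ 13 * x := by linarith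
        nlinarith [mul_nonneg (mul_nonneg hg0 hn0.le) (sub_nonneg.2 key)]
      rw [hgx]
      have : 2 * Z / 13 ≤ Z / 2 := by linarith
      linarith [hstep, hmain, h4]
    · -- small x : everything is O(Z)
      have hlin := gtilde_le_lin hn0 hZpos hx
      have hexpx : Real.exp (x ^ 2 / (16 * n)) ≤ 324 / 323 := by
        have hb : x ^ 2 / (16 * n) ≤ 1 / 324 := by
          rw [div_le_div_iff₀ (by positivity) (by norm_num)]
          nlinarith
        calc Real.exp (x ^ 2 / (16 * n)) ≤ Real.exp (1 / 324) := Real.exp_le_exp.2 hb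
          _ ≤ 1 / (1 - 1 / 324) := exp_le_inv (by norm_num) (by norm_num)
          _ = 324 / 323 := by norm_num
      have hgsmall : gtilde n Z x ≤ Z / 35 := by
        calc gtilde n Z x ≤ Z * x / 8 * Real.exp (x ^ 2 / (16 * n)) := hlin
          _ ≤ Z * (2/9) / 8 * (324 / 323) := by
              have h1 : Z * x / 8 ≤ Z * (2/9) / 8 := by nlinarith
              exact mul_le_mul h1 hexpx (Real.exp_pos _).le (by positivity)
          _ ≤ Z / 35 := by nlinarith
      have h5 : gtilde n Z x * (2 * x + 1) / (13 * n) ≤ Z / 315 := by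
        rw [div_le_iff₀ (by positivity)]
        have hnum : gtilde n Z x * (2 * x + 1) ≤ Z / 35 * (13 / 9) :=
          mul_le_mul hgsmall (by linarith) (by linarith) (by positivity)
        nlinarith [hnum, mul_nonneg hZpos.le (sub_nonneg.2 hn1)]
      have hxg : 0 ≤ x * gtilde n Z x := mul_nonneg hx hg0
      rw [hgx]
      have : gtilde n Z x * (2 * x + 1) / (13 * n) + 2 * Z / 13 ≤ Z / 2 := by
        linarith [h5, hZpos]
      have hslack : 0 ≤ x * gtilde n Z x / (2 * n) := by positivity
      linarith [hstep, hmain]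

end G

section KEY
variable {n Z : ℝ}

lemma gfun_one_le (hn1 : 1 ≤ n) (hZpos : 0 < Z) : gfun n Z 1 ≤ Z / 4 := by
  have hn0 : (0:ℝ) < n := by linarith
  have h1 : gfun n Z 1 ≤ gtilde n Z 1 := gfun_le_gtilde hZpos zero_le_one
  have h2 : gtilde n Z 1 ≤ Z * 1 / 8 * Real.exp (1 ^ 2 / (16 * n)) :=
    gtilde_le_lin hn0 hZpos zero_le_one
  have h3 : Real.exp ((1:ℝ) ^ 2 / (16 * n)) ≤ 16 / 15 := by
    have hb : (1:ℝ) ^ 2 / (16 * n) ≤ 1 / 16 := by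
      rw [div_le_div_iff₀ (by positivity) (by norm_num)]
      nlinarith
    calc Real.exp ((1:ℝ) ^ 2 / (16 * n)) ≤ Real.exp (1 / 16) := Real.exp_le_exp.2 hb
      _ ≤ 1 / (1 - 1 / 16) := exp_le_inv (by norm_num) (by norm_num)
      _ = 16 / 15 := by norm_num
  have h4 : Z * 1 / 8 * Real.exp ((1:ℝ) ^ 2 / (16 * n)) ≤ Z * 1 / 8 * (16 / 15) :=
    mul_le_mul_of_nonneg_left h3 (by positivity)
  nlinarith

lemma gfun_integrable (hn0 : 0 < n) (a b : ℝ) :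
    IntervalIntegrable (gfun n Z) MeasureTheory.volume a b :=
  (gfun_continuous hn0).intervalIntegrable a b

lemma Phi_diff (hn0 : 0 < n) (u v : ℝ) :
    Phi n Z v - Phi n Z u = ∫ s in u..v, gfun n Z s := by
  have h := intervalIntegral.integral_add_adjacent_intervals
    (gfun_integrable (n := n) (Z := Z) hn0 0 u) (gfun_integrable hn0 u v)
  simp only [Phi]
  linarith

lemma Phi_nonneg (hn0 : 0 < n) (hZpos : 0 < Z) (x : ℝ) : 0 ≤ Phi n Z x := by
  rcases le_or_gt 0 x with hx | hx
  · exact intervalIntegral.integral_nonneg hx (fun s _ => gfun_nonneg)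
  · have h0 : Phi n Z x = - ∫ s in x..(0:ℝ), gfun n Z s := by
      rw [Phi, ← intervalIntegral.integral_symm]
    have h1 : (∫ s in x..(0:ℝ), gfun n Z s) = 0 := by
      have : ∀ s ∈ Set.uIcc x (0:ℝ), gfun n Z s = (fun _ => (0:ℝ)) s := by
        intro s hs
        rw [Set.uIcc_of_le hx.le] at hs
        exact gfun_of_nonpos hZpos hs.2
      rw [intervalIntegral.integral_congr this]
      simp
    rw [h0, h1, neg_zero]

/-- The per-step key inequality. -/
lemma key_step (hn1 : 1 ≤ n) (hZpos : 0 < Z) (xv bv : ℝ) (hb : |bv| ≤ 1)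
    (hxn : |xv| ≤ n) :
    Phi n Z ((1 - 1/n) * xv + bv) - Phi n Z xv + xv * gfun n Z xv / (2*n) - Z/2
      ≤ gfun n Z xv * bv := by
  have hn0 : (0:ℝ) < n := by linarith
  have hnne : n ≠ 0 := ne_of_gt hn0
  obtain ⟨hb1, hb2⟩ := abs_le.1 hb
  obtain ⟨hx1, hx2⟩ := abs_le.1 hxn
  obtain ⟨δ, hδdef⟩ : ∃ δ, δ = bv - xv / n := ⟨_, rfl⟩
  have hxδ : (1 - 1/n) * xv + bv = xv + δ := by
    rw [hδdef]; field_simp; ring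
  rw [hxδ, Phi_diff hn0]
  obtain ⟨G, hG⟩ : ∃ G, G = gfun n Z xv := ⟨_, rfl⟩
  rw [← hG]
  have hhalf : xv * G / (2 * n) + xv * G / (2 * n) = xv * G / n := by
    field_simp
    ring
  have hG0 : 0 ≤ G := hG ▸ gfun_nonneg
  have hG1 : G ≤ 1 := hG ▸ gfun_le_one
  have hbveq : G * bv = δ * G + xv * G / n := by
    rw [hδdef]; field_simp; ring
  rcases le_or_gt 0 δ with hδ0 | hδ0
  · -- δ ≥ 0
    have hint : (∫ s in xv..(xv + δ), gfun n Z s) ≤ δ * gfun n Z (xv + δ) := by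
      have h := intervalIntegral.integral_mono_on (μ := MeasureTheory.volume)
        (g := fun _ : ℝ => gfun n Z (xv + δ)) (by linarith : xv ≤ xv + δ)
        (gfun_integrable hn0 _ _) ((continuous_const).intervalIntegrable _ _)
        (fun s hs => gfun_mono hn0 hZpos hs.2)
      simpa using h
    rcases le_or_gt 0 xv with hx0 | hx0
    · -- x ≥ 0, δ ∈ [0,1]
      have hδ1 : δ ≤ 1 := by
        rw [hδdef]
        have : 0 ≤ xv / n := by positivity
        linarith
      have hm1 : gfun n Z (xv + δ) ≤ gfun n Z (xv + 1) :=
        gfun_mono hn0 hZpos (by linarith)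
      have hupk := gup hn1 hZpos hx0 hx2
      have hmono01 : G ≤ gfun n Z (xv + 1) := by
        rw [hG]; exact gfun_mono hn0 hZpos (by linarith)
      have h2 : δ * gfun n Z (xv + δ) ≤ δ * gfun n Z (xv + 1) :=
        mul_le_mul_of_nonneg_left hm1 hδ0
      have h3 : δ * gfun n Z (xv + 1) ≤ δ * G + (gfun n Z (xv + 1) - G) := by
        nlinarith [mul_le_mul_of_nonneg_right hδ1 (sub_nonneg.2 hmono01)]
      rw [← hG] at hupk
      linarith [hint, h2, h3, hupk, hbveq, hhalf]
    · -- x < 0, δ ≥ 0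
      have hGz : G = 0 := by rw [hG]; exact gfun_of_nonpos hZpos hx0.le
      have hδ2 : δ ≤ 2 := by
        rw [hδdef]
        have h1 : -(xv / n) ≤ 1 := by
          rw [← neg_div, div_le_one hn0]
          linarith
        linarith
      have hsum1 : xv + δ ≤ 1 := by
        have heq : xv + δ = (1 - 1/n) * xv + bv := hxδ.symm
        rw [heq]
        have h1 : 0 ≤ 1 - 1/n := by
          rw [sub_nonneg, div_le_one hn0]; exact hn1
        nlinarith
      have hgb : gfun n Z (xv + δ) ≤ Z / 4 :=
        le_trans (gfun_mono hn0 hZpos hsum1) (gfun_one_le hn1 hZpos)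
      have h4 : δ * gfun n Z (xv + δ) ≤ 2 * (Z / 4) :=
        mul_le_mul hδ2 hgb gfun_nonneg (by norm_num)
      rw [hGz]
      simp only [mul_zero, zero_mul, zero_div]
      linarith [hint, h4]
  · -- δ < 0
    obtain ⟨w, hw⟩ : ∃ w, w = -δ := ⟨_, rfl⟩
    have hw0 : 0 < w := by rw [hw]; linarith
    have hint : (∫ s in xv..(xv + δ), gfun n Z s) ≤ δ * gfun n Z (xv + δ) := by
      rw [intervalIntegral.integral_symm]
      have h := intervalIntegral.integral_mono_on (μ := MeasureTheory.volume)
        (f := fun _ : ℝ => gfun n Z (xv + δ)) (by linarith : xv + δ ≤ xv)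
        ((continuous_const).intervalIntegrable _ _) (gfun_integrable hn0 _ _)
        (fun s hs => gfun_mono hn0 hZpos hs.1)
      simp only [intervalIntegral.integral_const, smul_eq_mul] at h
      have : (xv - (xv + δ)) * gfun n Z (xv + δ) = -(δ * gfun n Z (xv + δ)) := by ring
      rw [this] at h
      linarith
    rcases le_or_gt 0 xv with hx0 | hx0
    · -- x ≥ 0, δ < 0
      have hwle : w ≤ 1 + xv / n := by
        rw [hw, hδdef]
        have : -bv ≤ 1 := by linarith
        linarith
      have hW2 : (1:ℝ) + xv / n ≤ 2 := by
        have : xv / n ≤ 1 := by rw [div_le_one hn0]; exact hx2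
        linarith
      have hdownk := gdown hn0 hZpos hx0 (le_of_lt hw0)
      rw [← hG] at hdownk
      have hxw : xv - w = xv + δ := by rw [hw]; ring
      rw [hxw] at hdownk
      obtain ⟨S, hS⟩ : ∃ S, S = Z / 8 + xv * G / (8 * n) := ⟨_, rfl⟩
      rw [← hS] at hdownk
      have hS0 : 0 ≤ S := by
        rw [hS]
        have := mul_gfun_nonneg (n := n) hZpos xv
        rw [← hG] at this
        positivity
      have h4S : 4 * S = Z / 2 + xv * G / (2 * n) := by
        rw [hS]; field_simp; ring
      have hww : w * (G - gfun n Z (xv + δ)) ≤ w * (w * S) :=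
        mul_le_mul_of_nonneg_left hdownk hw0.le
      have hw2 : w ≤ 2 := le_trans hwle hW2
      have hwwS : w * (w * S) ≤ 4 * S := by
        nlinarith [mul_nonneg (mul_nonneg (sub_nonneg.2 hw2) (by linarith : (0:ℝ) ≤ 2 + w)) hS0]
      have heq : δ * gfun n Z (xv + δ) = δ * G + w * (G - gfun n Z (xv + δ)) := by
        rw [hw]; ring
      linarith [hint, hww, hwwS, hbveq, h4S, heq, hhalf]
    · -- x < 0, δ < 0
      have hGz : G = 0 := by rw [hG]; exact gfun_of_nonpos hZpos hx0.le
      have h5 : δ * gfun n Z (xv + δ) ≤ 0 :=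
        mul_nonpos_of_nonpos_of_nonneg hδ0.le gfun_nonneg
      rw [hGz]
      simp only [mul_zero, zero_mul, zero_div]
      linarith [hint, h5]

end KEY

/-- discounted payoff lower bound for DNP (plain updating) at its
own discount factor `ρ = 1 - 1/n`, in terms of the potential and `x_{T+1}`. -/
theorem dnp_discounted_payoff_rho
    (n Z : ℝ) (hn1 : 1 ≤ n) (hZpos : 0 < Z) (hZ : Z ≤ 1 / Real.exp 1)
    (hn : n ≥ max (8 * Real.exp 1) (16 * Real.log (1 / Z)))
    (T : ℕ) (b : ℕ → ℝ) (hb : ∀ t ∈ Finset.Icc 1 T, |b t| ≤ 1)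
    (ρ : ℝ) (hρ : ρ = 1 - 1 / n)
    (x : ℕ → ℝ) (hx1 : x 1 = 0)
    (hxrec : ∀ t, 1 ≤ t → t ≤ T → x (t + 1) = ρ * x t + b t) :
    ∑ t ∈ Finset.Icc 1 T, ρ ^ (T - t) * gfun n Z (x t) * b t ≥
      ∑ t ∈ Finset.Icc 1 T, ρ ^ (T - t) * b t
        + ∑ t ∈ Finset.Icc 1 T, ρ ^ (T - t) / n * (x t * gfun n Z (x t) / 2 - Phi n Z (x t))
        - Z / (2 * (1 - ρ)) - x (T + 1) := by
  have hn0 : (0:ℝ) < n := by linarith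
  have hnne : n ≠ 0 := ne_of_gt hn0
  have hρ0 : 0 ≤ ρ := by
    rw [hρ, sub_nonneg, div_le_one hn0]; exact hn1
  have hρn : ρ * n = n - 1 := by rw [hρ]; field_simp
  -- generic sum shift
  have sum_shift : ∀ (f : ℕ → ℝ) (S : ℕ),
      ∑ t ∈ Finset.Icc 1 (S+1), ρ ^ (S+1-t) * f t
        = ρ * ∑ t ∈ Finset.Icc 1 S, ρ ^ (S-t) * f t + f (S+1) := by
    intro f S
    rw [Finset.sum_Icc_succ_top (Nat.succ_le_succ (Nat.zero_le S)), Finset.mul_sum]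
    have hcon : ∀ t ∈ Finset.Icc 1 S, ρ ^ (S+1-t) * f t = ρ * (ρ ^ (S-t) * f t) := by
      intro t ht
      have ht' := Finset.mem_Icc.1 ht
      rw [show S+1-t = (S-t)+1 by omega, pow_succ]
      ring
    rw [Finset.sum_congr rfl hcon]
    simp
  -- bound on |x t|
  have hxb : ∀ t, 1 ≤ t → t ≤ T + 1 → |x t| ≤ n := by
    intro t
    induction t with
    | zero => intro h1 _; exact absurd h1 (by omega)
    | succ k ih =>
      intro h1 h2
      rcases Nat.eq_zero_or_pos k with hk | hk
      · subst hk; rw [hx1]; simp; linarith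
      · have hkT : k ≤ T := by omega
        have hrec := hxrec k hk hkT
        have hbk := hb k (Finset.mem_Icc.2 ⟨hk, hkT⟩)
        have hxk := ih hk (by omega)
        rw [hrec]
        calc |ρ * x k + b k| ≤ |ρ * x k| + |b k| := abs_add_le _ _
          _ = ρ * |x k| + |b k| := by rw [abs_mul, abs_of_nonneg hρ0]
          _ ≤ ρ * n + 1 := by
              have := mul_le_mul_of_nonneg_left hxk hρ0
              linarith
          _ = n := by rw [hρn]; ring
  -- discounted sum of b equals x (T+1)
  have hxsum : ∀ S, S ≤ T → ∑ t ∈ Finset.Icc 1 S, ρ ^ (S-t) * b t = x (S+1) := by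
    intro S
    induction S with
    | zero => intro _; simp [hx1]
    | succ k ih =>
      intro hS
      have hkT : k ≤ T := by omega
      rw [sum_shift b k, ih hkT, ← hxrec (k+1) (by omega) hS]
  -- key potential induction
  have hQ : ∀ t, 1 ≤ t → t ≤ T →
      Phi n Z (x (t+1)) - ρ * Phi n Z (x t) ≤
        gfun n Z (x t) * b t
          - (x t * gfun n Z (x t) / 2 - Phi n Z (x t)) / n + Z / 2 := by
    intro t h1 h2
    have hbk := hb t (Finset.mem_Icc.2 ⟨h1, h2⟩)
    have hxk := hxb t h1 (by omega)
    have hkey := key_step hn1 hZpos (x t) (b t) hbk hxk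
    have hrec : x (t+1) = (1 - 1/n) * x t + b t := by rw [hxrec t h1 h2, hρ]
    rw [← hrec] at hkey
    have e1 : ρ * Phi n Z (x t) = Phi n Z (x t) - Phi n Z (x t) / n := by
      rw [hρ]; field_simp
    have e2 : (x t * gfun n Z (x t) / 2 - Phi n Z (x t)) / n
        = x t * gfun n Z (x t) / (2 * n) - Phi n Z (x t) / n := by
      field_simp
    rw [e1, e2]
    linarith [hkey]
  have hPhi0 : Phi n Z (x 1) = 0 := by rw [hx1]; simp [Phi]
  have hmain : ∀ S, S ≤ T →
      Phi n Z (x (S+1)) ≤ ∑ t ∈ Finset.Icc 1 S, ρ ^ (S-t) *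
        (gfun n Z (x t) * b t
          - (x t * gfun n Z (x t) / 2 - Phi n Z (x t)) / n + Z / 2) := by
    intro S
    induction S with
    | zero => intro _; simp [hPhi0]
    | succ k ih =>
      intro hS
      have hkT : k ≤ T := by omega
      rw [sum_shift _ k]
      have h1 := hQ (k+1) (by omega) hS
      have h2 := mul_le_mul_of_nonneg_left (ih hkT) hρ0
      linarith [h1, h2]
  -- geometric bound
  have hgeo : ∀ S : ℕ, ∑ t ∈ Finset.Icc 1 S, ρ ^ (S-t) * (Z/2) ≤ n * (Z/2) := by
    intro S
    induction S with
    | zero => simp; positivity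
    | succ k ih =>
      rw [sum_shift _ k]
      have h2 := mul_le_mul_of_nonneg_left ih hρ0
      have h3 : ρ * (n * (Z/2)) + Z/2 ≤ n * (Z/2) := by
        have : ρ * (n * (Z/2)) = (n - 1) * (Z/2) := by
          rw [← hρn]; ring
        rw [this]
        linarith
      linarith
  -- final assembly
  have hsplit : ∑ t ∈ Finset.Icc 1 T, ρ ^ (T-t) *
        (gfun n Z (x t) * b t
          - (x t * gfun n Z (x t) / 2 - Phi n Z (x t)) / n + Z / 2)
      = (∑ t ∈ Finset.Icc 1 T, ρ ^ (T-t) * gfun n Z (x t) * b t)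
        - (∑ t ∈ Finset.Icc 1 T, ρ ^ (T-t) / n * (x t * gfun n Z (x t) / 2 - Phi n Z (x t)))
        + ∑ t ∈ Finset.Icc 1 T, ρ ^ (T-t) * (Z/2) := by
    rw [← Finset.sum_sub_distrib, ← Finset.sum_add_distrib]
    apply Finset.sum_congr rfl
    intro t _
    ring
  have hZhalf : Z / (2 * (1 - ρ)) = n * (Z/2) := by
    rw [hρ]
    field_simp
    ring
  have hfinal := hmain T le_rfl
  rw [hsplit] at hfinal
  have hPnn := Phi_nonneg hn0 hZpos (x (T+1))
  have hxs := hxsum T le_rfl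
  rw [ge_iff_le, hZhalf, ← hxs]
  linarith [hfinal, hgeo T, hPnn]
end
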